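/- The diagonal stiffness entry satisfies S_{ii} = d(λF)/dλ evaluated at λ_i, i.e., ∫₀ᴸ ((u_i')² + p u_i²) dx = F(λ_i) + λ_i F'(λ_i) + 2λ_i ∫₀ᴸ u_i ∂_λ u(·,λ_i) dx combined with the equation reduces to S_{ii} = F(λ_i) + λ_i F'(λ_i). -/

import Mathlib

open intervalIntegral Set

/-- Diagonal stiffness entry: `Sᵢᵢ = ∫₀ᴸ ((uᵢ')² + p uᵢ²) = F(λᵢ) + λᵢ F'(λᵢ)`,
i.e. `Sᵢᵢ = d(λF)/dλ` at `λᵢ`. -/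
theorem stiffness_matrix_diagonal
    (L : ℝ) (hL : 0 < L) (p g : ℝ → ℝ)
    (hp : ContinuousOn p (Icc 0 L)) (hp0 : ∀ x ∈ Icc 0 L, 0 ≤ p x)
    (hg : Continuous g)
    (lami : ℝ) (hlami : 0 < lami)
    (u : ℝ → ℝ → ℝ) (v : ℝ → ℝ)
    (hu : ∀ mu > (0:ℝ), ContDiff ℝ 2 (u mu)) (hv : ContDiff ℝ 2 v)
    (heq : ∀ mu > (0:ℝ), ∀ x ∈ Icc 0 L,
      -(deriv (deriv (u mu)) x) + p x * u mu x + mu * u mu x = g x)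
    (hbc0 : ∀ mu > (0:ℝ), deriv (u mu) 0 = 0) (hbcL : ∀ mu > (0:ℝ), deriv (u mu) L = 0)
    -- `v = ∂u/∂λ` at `λᵢ`:
    (hdu : ∀ x ∈ Icc 0 L, HasDerivAt (fun mu => u mu x) (v x) lami)
    -- the differentiated equation `-v'' + p v + λᵢ v = -u(·,λᵢ)` with Neumann conditions:
    (heqv : ∀ x ∈ Icc 0 L,
      -(deriv (deriv v) x) + p x * v x + lami * v x = -(u lami x))
    (hbcv0 : deriv v 0 = 0) (hbcvL : deriv v L = 0)
    -- differentiation under the integral sign: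
    (hswap : HasDerivAt (fun mu => ∫ x in (0:ℝ)..L, g x * u mu x)
      (∫ x in (0:ℝ)..L, g x * v x) lami) :
    ∫ x in (0:ℝ)..L, ((deriv (u lami) x) ^ 2 + p x * (u lami x) ^ 2) =
      (∫ x in (0:ℝ)..L, g x * u lami x) +
        lami * deriv (fun mu => ∫ x in (0:ℝ)..L, g x * u mu x) lami := by
  have hL' : (0:ℝ) ≤ L := hL.le
  have huIcc : uIcc (0:ℝ) L = Icc 0 L := uIcc_of_le hL'
  set w := u lami with hw_def
  have hw : ContDiff ℝ 2 w := hu lami hlami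
  have hwd : Differentiable ℝ w := hw.differentiable (by norm_num)
  have hdw : ContDiff ℝ 1 (deriv w) := (contDiff_succ_iff_deriv.mp (show ContDiff ℝ (1+1) w from hw)).2.2
  have hvd : Differentiable ℝ v := hv.differentiable (by norm_num)
  have hdv : ContDiff ℝ 1 (deriv v) := (contDiff_succ_iff_deriv.mp (show ContDiff ℝ (1+1) v from hv)).2.2
  have cw : Continuous w := hw.continuous
  have cw1 : Continuous (deriv w) := hdw.continuous
  have cw2 : Continuous (deriv (deriv w)) := hdw.continuous_deriv le_rfl
  have cv : Continuous v := hv.continuous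
  have cv1 : Continuous (deriv v) := hdv.continuous
  have cv2 : Continuous (deriv (deriv v)) := hdv.continuous_deriv le_rfl
  have hInt : ∀ f : ℝ → ℝ, ContinuousOn f (Icc 0 L) → IntervalIntegrable f MeasureTheory.volume 0 L :=
    fun f hf => ContinuousOn.intervalIntegrable (huIcc ▸ hf)
  have hpI := hp
  -- HasDerivAt hypotheses for integration by parts
  have Hw : ∀ x ∈ uIcc (0:ℝ) L, HasDerivAt w (deriv w x) x := fun x _ => (hwd x).hasDerivAt
  have Hw' : ∀ x ∈ uIcc (0:ℝ) L, HasDerivAt (deriv w) (deriv (deriv w) x) x :=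
    fun x _ => ((hdw.differentiable (by norm_num)) x).hasDerivAt
  have Hv : ∀ x ∈ uIcc (0:ℝ) L, HasDerivAt v (deriv v x) x := fun x _ => (hvd x).hasDerivAt
  have Hv' : ∀ x ∈ uIcc (0:ℝ) L, HasDerivAt (deriv v) (deriv (deriv v) x) x :=
    fun x _ => ((hdv.differentiable (by norm_num)) x).hasDerivAt
  have hbcw0 : deriv w 0 = 0 := hbc0 lami hlami
  have hbcwL : deriv w L = 0 := hbcL lami hlami
  -- IBP 1 : ∫ w' w' = - ∫ w'' w
  have ibp1 : (∫ x in (0:ℝ)..L, deriv w x * deriv w x)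
      = - ∫ x in (0:ℝ)..L, deriv (deriv w) x * w x := by
    have := integral_mul_deriv_eq_deriv_mul Hw' Hw
      (hInt _ cw2.continuousOn) (hInt _ cw1.continuousOn)
    rw [this, hbcw0, hbcwL]; ring
  -- IBP 2 : ∫ v * w'' = - ∫ v' w'
  have ibp2 : (∫ x in (0:ℝ)..L, v x * deriv (deriv w) x)
      = - ∫ x in (0:ℝ)..L, deriv v x * deriv w x := by
    have := integral_mul_deriv_eq_deriv_mul Hv Hw'
      (hInt _ cv1.continuousOn) (hInt _ cw2.continuousOn)
    rw [this, hbcw0, hbcwL]; ring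
  -- IBP 3 : ∫ w * v'' = - ∫ w' v'
  have ibp3 : (∫ x in (0:ℝ)..L, w x * deriv (deriv v) x)
      = - ∫ x in (0:ℝ)..L, deriv w x * deriv v x := by
    have := integral_mul_deriv_eq_deriv_mul Hw Hv'
      (hInt _ cw1.continuousOn) (hInt _ cv2.continuousOn)
    rw [this, hbcv0, hbcvL]; ring
  have symm : (∫ x in (0:ℝ)..L, v x * deriv (deriv w) x)
      = ∫ x in (0:ℝ)..L, w x * deriv (deriv v) x := by
    rw [ibp2, ibp3]
    congr 1
    exact integral_congr (fun x _ => by ring)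
  -- key1 : F = ∫ w'² + ∫ p w² + λ ∫ w²
  have key1 : (∫ x in (0:ℝ)..L, g x * w x)
      = (∫ x in (0:ℝ)..L, deriv w x * deriv w x)
        + (∫ x in (0:ℝ)..L, p x * (w x * w x))
        + lami * ∫ x in (0:ℝ)..L, w x * w x := by
    have hsplit : (∫ x in (0:ℝ)..L, g x * w x)
        = (∫ x in (0:ℝ)..L, -(deriv (deriv w) x * w x))
          + (∫ x in (0:ℝ)..L, p x * (w x * w x))
          + ∫ x in (0:ℝ)..L, lami * (w x * w x) := by
      rw [← integral_add, ← integral_add]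
      · refine integral_congr fun x hx => ?_
        rw [huIcc] at hx
        have := heq lami hlami x hx
        simp only [← hw_def] at this
        linear_combination (- w x) * this
      · exact hInt _ (((cw2.mul cw).neg.continuousOn).add (hp.mul (cw.mul cw).continuousOn))
      · exact hInt _ ((continuous_const.mul (cw.mul cw)).continuousOn)
      · exact hInt _ ((cw2.mul cw).neg.continuousOn)
      · exact hInt _ (hp.mul (cw.mul cw).continuousOn)
    rw [hsplit, integral_neg, ← ibp1, integral_const_mul]
  -- key2 : ∫ g v = - ∫ w²
  have key2 : (∫ x in (0:ℝ)..L, g x * v x) = - ∫ x in (0:ℝ)..L, w x * w x := by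
    have h1 : (∫ x in (0:ℝ)..L, g x * v x)
        = (∫ x in (0:ℝ)..L, -(v x * deriv (deriv w) x))
          + (∫ x in (0:ℝ)..L, p x * (w x * v x))
          + ∫ x in (0:ℝ)..L, lami * (w x * v x) := by
      rw [← integral_add, ← integral_add]
      · refine integral_congr fun x hx => ?_
        rw [huIcc] at hx
        have := heq lami hlami x hx
        simp only [← hw_def] at this
        linear_combination (- v x) * this
      · exact hInt _ ((((cv.mul cw2).neg).continuousOn).add (hp.mul (cw.mul cv).continuousOn))
      · exact hInt _ ((continuous_const.mul (cw.mul cv)).continuousOn)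
      · exact hInt _ ((cv.mul cw2).neg.continuousOn)
      · exact hInt _ (hp.mul (cw.mul cv).continuousOn)
    have h2 : (∫ x in (0:ℝ)..L, w x * w x)
        = (∫ x in (0:ℝ)..L, w x * deriv (deriv v) x)
          + (∫ x in (0:ℝ)..L, -(p x * (w x * v x)))
          + ∫ x in (0:ℝ)..L, -(lami * (w x * v x)) := by
      rw [← integral_add, ← integral_add]
      · refine integral_congr fun x hx => ?_
        rw [huIcc] at hx
        have := heqv x hx
        linear_combination (w x) * this
      · exact hInt _ (((cw.mul cv2).continuousOn).add ((hp.mul (cw.mul cv).continuousOn).neg))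
      · exact hInt _ ((continuous_const.mul (cw.mul cv)).neg.continuousOn)
      · exact hInt _ ((cw.mul cv2).continuousOn)
      · exact hInt _ ((hp.mul (cw.mul cv).continuousOn).neg)
    rw [integral_neg] at h1
    rw [integral_neg, integral_neg] at h2
    rw [h1, h2, symm]; ring
  have hD : deriv (fun mu => ∫ x in (0:ℝ)..L, g x * u mu x) lami
      = ∫ x in (0:ℝ)..L, g x * v x := hswap.deriv
  have hLHS : (∫ x in (0:ℝ)..L, ((deriv w x) ^ 2 + p x * (w x) ^ 2))
      = (∫ x in (0:ℝ)..L, deriv w x * deriv w x)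
        + ∫ x in (0:ℝ)..L, p x * (w x * w x) := by
    rw [← integral_add (hInt (fun x => deriv w x * deriv w x) (cw1.mul cw1).continuousOn)
        (hInt (fun x => p x * (w x * w x)) (hp.mul (cw.mul cw).continuousOn))]
    exact integral_congr fun x _ => by ring
  rw [hD, key2, hLHS, key1]; ring
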